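/- Let T be a row-stochastic matrix on a finite type S that is irreducible (for all s, s' : S there exists m : ℕ with 0 < m and (T ^ m) s s' > 0), let μ be a stationary distribution of T, and let L := 1 - T be the Laplacian matrix. Then for every vector ν : S → ℝ and every state s : S, det (L.updateColumn s ν) = (∑ x, μ x * ν x) * det (L.updateColumn s (fun _ => 1)), where L.updateColumn s w denotes the matrix obtained from L by replacing the column indexed by s with the vector w. In particular, when det (L.updateColumn s (fun _ => 1)) ≠ 0, the stationary average μ · ν equals det (L.updateColumn s ν) / det (L.updateColumn s (fun _ => 1)) for every s. -/

import Mathlib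

section Aux

variable {S : Type*} [Fintype S] [DecidableEq S]

/-- Stationarity propagates to powers of T. -/
lemma stat_pow (T : Matrix S S ℝ) (v : S → ℝ)
    (hv : ∀ s, ∑ s', v s' * T s' s = v s) (m : ℕ) :
    ∀ s, ∑ s', v s' * (T ^ m) s' s = v s := by
  induction m with
  | zero =>
    intro s
    simp [Matrix.one_apply, mul_ite]
  | succ m ih =>
    intro s
    have : (T ^ (m + 1)) = T ^ m * T := by rw [pow_succ]
    simp only [this, Matrix.mul_apply]
    calc ∑ s', v s' * ∑ k, (T ^ m) s' k * T k s
        = ∑ s', ∑ k, v s' * (T ^ m) s' k * T k s := by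
          refine Finset.sum_congr rfl fun s' _ => ?_
          rw [Finset.mul_sum]; refine Finset.sum_congr rfl fun k _ => ?_; ring
      _ = ∑ k, (∑ s', v s' * (T ^ m) s' k) * T k s := by
          rw [Finset.sum_comm]
          refine Finset.sum_congr rfl fun k _ => ?_
          rw [Finset.sum_mul]
      _ = ∑ k, v k * T k s := by
          refine Finset.sum_congr rfl fun k _ => ?_
          rw [ih k]
      _ = v s := hv s

/-- A nonnegative stationary vector that is positive somewhere is positive everywhere,
by irreducibility. -/
lemma stat_pos (T : Matrix S S ℝ) (hT0 : ∀ s s', 0 ≤ T s s')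
    (hirr : ∀ s s' : S, ∃ m : ℕ, 0 < m ∧ 0 < (T ^ m) s s')
    (v : S → ℝ) (hv0 : ∀ s, 0 ≤ v s)
    (hv : ∀ s, ∑ s', v s' * T s' s = v s)
    {s0 : S} (hpos : 0 < v s0) : ∀ s, 0 < v s := by
  intro s
  obtain ⟨m, hm, hTm⟩ := hirr s0 s
  have key := stat_pow T v hv m s
  have hpow0 : ∀ a b, 0 ≤ (T ^ m) a b := by
    intro a b
    have : ∀ k, ∀ a b : S, 0 ≤ (T ^ k) a b := by
      intro k
      induction k with
      | zero => intro a b; by_cases h : a = b <;> simp [Matrix.one_apply, h]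
      | succ k ih =>
        intro a b
        rw [pow_succ, Matrix.mul_apply]
        exact Finset.sum_nonneg fun c _ => mul_nonneg (ih a c) (hT0 c b)
    exact this m a b
  have hterm : v s0 * (T ^ m) s0 s ≤ ∑ s', v s' * (T ^ m) s' s := by
    exact Finset.single_le_sum (f := fun s' => v s' * (T ^ m) s' s)
      (fun i _ => mul_nonneg (hv0 i) (hpow0 i s)) (Finset.mem_univ s0)
  have : 0 < v s0 * (T ^ m) s0 s := mul_pos hpos hTm
  linarith [key ▸ hterm]

/-- Absolute value of a stationary vector is stationary. -/
lemma stat_abs (T : Matrix S S ℝ) (hT0 : ∀ s s', 0 ≤ T s s') (hT1 : ∀ s, ∑ s', T s s' = 1)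
    (v : S → ℝ) (hv : ∀ s, ∑ s', v s' * T s' s = v s) :
    ∀ s, ∑ s', |v s'| * T s' s = |v s| := by
  have hle : ∀ s, |v s| ≤ ∑ s', |v s'| * T s' s := by
    intro s
    calc |v s| = |∑ s', v s' * T s' s| := by rw [hv s]
      _ ≤ ∑ s', |v s' * T s' s| := Finset.abs_sum_le_sum_abs _ _
      _ = ∑ s', |v s'| * T s' s := by
          refine Finset.sum_congr rfl fun s' _ => ?_
          rw [abs_mul, abs_of_nonneg (hT0 s' s)]
  have hsum : ∑ s, (∑ s', |v s'| * T s' s - |v s|) = 0 := by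
    rw [Finset.sum_sub_distrib, Finset.sum_comm]
    have : ∑ s', ∑ s, |v s'| * T s' s = ∑ s', |v s'| := by
      refine Finset.sum_congr rfl fun s' _ => ?_
      rw [← Finset.mul_sum, hT1 s', mul_one]
    rw [this, sub_self]
  have hzero := (Finset.sum_eq_zero_iff_of_nonneg
    (fun s _ => sub_nonneg.mpr (hle s))).mp hsum
  intro s
  have := hzero s (Finset.mem_univ s)
  linarith

/-- Uniqueness of the stationary vector up to scalar, for irreducible stochastic T. -/
lemma stat_unique (T : Matrix S S ℝ) (hT0 : ∀ s s', 0 ≤ T s s') (hT1 : ∀ s, ∑ s', T s s' = 1)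
    (hirr : ∀ s s' : S, ∃ m : ℕ, 0 < m ∧ 0 < (T ^ m) s s')
    (μ : S → ℝ) (hμ0 : ∀ s, 0 ≤ μ s) (hμ1 : ∑ s, μ s = 1)
    (hμstat : ∀ s, ∑ s', μ s' * T s' s = μ s)
    (w : S → ℝ) (hw : ∀ s, ∑ s', w s' * T s' s = w s) :
    ∃ c : ℝ, ∀ x, w x = c * μ x := by
  -- μ is positive somewhere
  obtain ⟨s1, -, hs1⟩ : ∃ s ∈ Finset.univ, 0 < μ s := by
    by_contra h
    push_neg at h
    have : ∑ s, μ s ≤ 0 := Finset.sum_nonpos fun s hs => (h s hs)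
    linarith [hμ1]
  have hμpos : ∀ s, 0 < μ s := stat_pos T hT0 hirr μ hμ0 hμstat hs1
  -- define z = w - c μ with c making z vanish at s1
  set c := w s1 / μ s1 with hc
  refine ⟨c, fun x => ?_⟩
  set z : S → ℝ := fun x => w x - c * μ x with hz
  have hzstat : ∀ s, ∑ s', z s' * T s' s = z s := by
    intro s
    simp only [hz, sub_mul, mul_assoc]
    rw [Finset.sum_sub_distrib, hw s, ← Finset.mul_sum, hμstat s]
  have hzs1 : z s1 = 0 := by
    simp only [hz, hc]
    field_simp
    ring
  have habs := stat_abs T hT0 hT1 z hzstat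
  have hzero : ∀ s, z s = 0 := by
    intro s
    by_contra h
    have : 0 < |z s| := abs_pos.mpr h
    have := stat_pos T hT0 hirr (fun x => |z x|) (fun x => abs_nonneg _) habs this s1
    rw [hzs1] at this
    simp at this
  have := hzero x
  simp only [hz] at this
  linarith

end Aux

theorem stationary_average_det_formula {S : Type*} [Fintype S] [DecidableEq S]
    (T : Matrix S S ℝ)
    (hT0 : ∀ s s', 0 ≤ T s s') (hT1 : ∀ s, ∑ s', T s s' = 1)
    (hirr : ∀ s s' : S, ∃ m : ℕ, 0 < m ∧ 0 < (T ^ m) s s')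
    (μ : S → ℝ)
    (hμ0 : ∀ s, 0 ≤ μ s) (hμ1 : ∑ s, μ s = 1)
    (hμstat : ∀ s, ∑ s', μ s' * T s' s = μ s)
    (L : Matrix S S ℝ) (hL : L = 1 - T) :
    ∀ (ν : S → ℝ) (s : S),
      Matrix.det (L.updateCol s ν) =
        (∑ x, μ x * ν x) * Matrix.det (L.updateCol s fun _ => 1) := by
  intro ν s
  -- S is nonempty
  have hne : Nonempty S := by
    by_contra h
    rw [not_nonempty_iff] at h
    simp [Finset.univ_eq_empty] at hμ1
  -- det L = 0 since L *ᵥ 1 = 0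
  have hdet : L.det = 0 := by
    rw [← Matrix.exists_mulVec_eq_zero_iff]
    refine ⟨fun _ => 1, ?_, ?_⟩
    · intro h
      have := congrFun h (Classical.arbitrary S)
      simp at this
    · funext t
      simp only [Matrix.mulVec, dotProduct, hL, Matrix.sub_apply, mul_one,
        Pi.zero_apply]
      rw [Finset.sum_sub_distrib, hT1 t]
      simp [Matrix.one_apply]
  -- the s-th row of adjugate L is a left-null vector of L, hence stationary
  set w : S → ℝ := fun x => L.adjugate s x with hw
  have hwstat : ∀ t, ∑ x, w x * T x t = w t := by
    intro t
    have hadj : (L.adjugate * L) s t = 0 := by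
      rw [Matrix.adjugate_mul, hdet]
      simp
    rw [Matrix.mul_apply] at hadj
    have hsplit : ∑ x, L.adjugate s x * L x t = w t - ∑ x, w x * T x t := by
      simp only [hw, hL, Matrix.sub_apply, mul_sub]
      rw [Finset.sum_sub_distrib]
      congr 1
      simp [Matrix.one_apply, mul_ite]
    rw [hsplit] at hadj
    linarith
  obtain ⟨c, hcw⟩ := stat_unique T hT0 hT1 hirr μ hμ0 hμ1 hμstat w hwstat
  -- expand both determinants via cramer = adjugate *ᵥ
  have hexp : ∀ b : S → ℝ, Matrix.det (L.updateCol s b) = ∑ x, w x * b x := by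
    intro b
    rw [← Matrix.cramer_apply, Matrix.cramer_eq_adjugate_mulVec]
    simp [Matrix.mulVec, dotProduct, hw]
  rw [hexp ν, hexp (fun _ => 1)]
  simp only [mul_one]
  calc ∑ x, w x * ν x = ∑ x, c * (μ x * ν x) := by
        refine Finset.sum_congr rfl fun x _ => ?_
        rw [hcw x]; ring
    _ = c * ∑ x, μ x * ν x := by rw [← Finset.mul_sum]
    _ = (∑ x, μ x * ν x) * ∑ x, w x := by
        have hwc : ∑ x, w x = c := by
          calc ∑ x, w x = ∑ x, c * μ x := Finset.sum_congr rfl fun x _ => hcw x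
            _ = c * ∑ x, μ x := by rw [← Finset.mul_sum]
            _ = c := by rw [hμ1, mul_one]
        rw [mul_comm, hwc]
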